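/- Let μ > 0, α > 0 with 1 - 4μα ≥ 0, and let f solve the damped oscillator ODE μ f'' + f' + α f = 0 with f(0) = 0 and f'(0) = v. Then for all t ≥ 0, |f(t)| ≤ 4 μ |v| e^{-α t}. -/

import Mathlib

lemma const_of_deriv_zero (φ : ℝ → ℝ) (hd : ∀ x, 0 ≤ x → HasDerivAt φ 0 x) :
    ∀ t, 0 ≤ t → φ t = φ 0 := by
  intro t ht
  have := constant_of_has_deriv_right_zero (f := φ) (a := 0) (b := t)
    (fun x hx => ((hd x hx.1).continuousAt).continuousWithinAt)
    (fun x hx => (hd x hx.1).hasDerivWithinAt)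
  exact this t ⟨ht, le_rfl⟩

lemma te_bound (c t : ℝ) (hc : 0 < c) (ht : 0 ≤ t) :
    t * Real.exp (-(c * t)) ≤ 1 / (c * Real.exp 1) := by
  have h1 : c * t ≤ Real.exp (c * t - 1) := by
    have := Real.add_one_le_exp (c * t - 1); linarith
  have h2 : Real.exp (c * t - 1) = Real.exp (c * t) / Real.exp 1 := by
    rw [Real.exp_sub]
  have hep : (0:ℝ) < Real.exp 1 := Real.exp_pos 1
  have hex : (0:ℝ) < Real.exp (c * t) := Real.exp_pos _
  rw [Real.exp_neg, ← div_eq_mul_inv, div_le_div_iff₀ hex (by positivity)]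
  calc t * (c * Real.exp 1) = (c * t) * Real.exp 1 := by ring
    _ ≤ (Real.exp (c*t) / Real.exp 1) * Real.exp 1 := by
        apply mul_le_mul_of_nonneg_right _ hep.le; rw [← h2]; exact h1
    _ = 1 * Real.exp (c * t) := by field_simp

lemma exp_mul_deriv (r : ℝ) (g : ℝ → ℝ) (g' : ℝ) (x : ℝ) (hg : HasDerivAt g g' x) :
    HasDerivAt (fun u => Real.exp (-(r*u)) * g u) (Real.exp (-(r*x)) * (g' - r * g x)) x := by
  have h1 : HasDerivAt (fun u : ℝ => -(r*u)) (-r) x := by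
    exact (((hasDerivAt_id x).const_mul r).neg).congr_deriv (by ring)
  have h2 := (h1.exp).mul hg
  refine h2.congr_deriv ?_
  ring

set_option maxHeartbeats 1000000 in
theorem stmt_3 (μ α v : ℝ) (hμ : 0 < μ) (hα : 0 < α) (hdisc : 0 ≤ 1 - 4 * μ * α)
    (f f' f'' : ℝ → ℝ)
    (hf : ∀ t, 0 ≤ t → HasDerivAt f (f' t) t)
    (hf' : ∀ t, 0 ≤ t → HasDerivAt f' (f'' t) t)
    (hode : ∀ t, 0 ≤ t → μ * f'' t + f' t + α * f t = 0)
    (h0 : f 0 = 0) (h0' : f' 0 = v) :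
    ∀ t, 0 ≤ t → |f t| ≤ 4 * μ * |v| * Real.exp (-(α * t)) := by
  have hμ0 : μ ≠ 0 := hμ.ne'
  set s := Real.sqrt (1 - 4*μ*α) with hs_def
  have hs0 : 0 ≤ s := Real.sqrt_nonneg _
  have hs2 : s^2 = 1 - 4*μ*α := Real.sq_sqrt (by linarith)
  have hs1 : s < 1 := by nlinarith
  set rp := (-1+s)/(2*μ) with hrp_def
  set rm := (-1-s)/(2*μ) with hrm_def
  have e1 : rp + rm = -(1/μ) := by rw [hrp_def, hrm_def]; field_simp; ring
  have e2 : rp * rm = α/μ := by rw [hrp_def, hrm_def]; field_simp; nlinarith [hs2]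
  have e3 : rp - rm = s/μ := by rw [hrp_def, hrm_def]; field_simp; ring
  have e4 : rp + α = -((1-s)^2/(4*μ)) := by
    rw [hrp_def]; field_simp; nlinarith [hs2]
  have hrmrp : rm ≤ rp := by
    apply div_le_div_of_nonneg_right ?_ (by linarith) |>.trans_eq rfl
    · linarith
  -- Step 1: h = f' - rm f satisfies h' = rp h
  set h : ℝ → ℝ := fun u => f' u - rm * f u with hh_def
  have key1 : ∀ x, 0 ≤ x → f'' x - rm * f' x = rp * (f' x - rm * f x) := by
    intro x hx
    have ho := hode x hx
    have : f'' x + (1/μ) * f' x + (α/μ) * f x = 0 := by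
      field_simp
      linarith [ho]
    linear_combination this - f' x * e1 + f x * e2
  have hh : ∀ x, 0 ≤ x → HasDerivAt h (rp * h x) x := by
    intro x hx
    have h1 := (hf' x hx).sub ((hf x hx).const_mul rm)
    rw [hh_def]
    rw [show rp * (f' x - rm * f x) = f'' x - rm * f' x from (key1 x hx).symm]
    exact h1
  -- Step 2: h x = v * exp (rp x)
  have step2 : ∀ x, 0 ≤ x → h x = v * Real.exp (rp * x) := by
    have hd : ∀ x, 0 ≤ x → HasDerivAt (fun u => Real.exp (-(rp*u)) * h u) 0 x := by
      intro x hx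
      have := exp_mul_deriv rp h (rp * h x) x (hh x hx)
      simpa using this
    intro x hx
    have := const_of_deriv_zero _ hd x hx
    simp only [mul_zero, neg_zero, Real.exp_zero, one_mul] at this
    have hv : h 0 = v := by simp [hh_def, h0, h0']
    rw [hv] at this
    calc h x = (Real.exp (-(rp*x)) * h x) * Real.exp (rp*x) := by
              rw [mul_comm (Real.exp (-(rp*x))), mul_assoc, ← Real.exp_add]; simp
      _ = v * Real.exp (rp*x) := by rw [this]
  -- general bound: t * exp(rp t) ≤ 4 μ exp(-α t) when s < 1/4
  have boundB : ∀ t, 0 ≤ t → s < 1/4 → t * Real.exp (rp * t) ≤ 4*μ * Real.exp (-(α*t)) := by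
    intro t ht hs14
    set c := (1-s)^2/(4*μ) with hc_def
    have h1s : (0:ℝ) < 1 - s := by linarith
    have hc : 0 < c := by rw [hc_def]; positivity
    have hsplit : rp * t = -(c*t) + -(α*t) := by
      have : rp = -c - α := by rw [hc_def]; linarith [e4]
      rw [this]; ring
    have he : (2:ℝ) ≤ Real.exp 1 := by have := Real.add_one_le_exp 1; linarith
    have h916 : (9:ℝ)/16 ≤ (1-s)^2 := by nlinarith
    have h4c : 4*μ*c = (1-s)^2 := by rw [hc_def]; field_simp
    calc t * Real.exp (rp*t) = (t * Real.exp (-(c*t))) * Real.exp (-(α*t)) := by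
          rw [hsplit, Real.exp_add]; ring
      _ ≤ (1/(c*Real.exp 1)) * Real.exp (-(α*t)) :=
          mul_le_mul_of_nonneg_right (te_bound c t hc ht) (Real.exp_pos _).le
      _ ≤ 4*μ * Real.exp (-(α*t)) := by
          apply mul_le_mul_of_nonneg_right _ (Real.exp_pos _).le
          rw [div_le_iff₀ (by positivity)]
          nlinarith [Real.exp_pos 1]
  have hrpα : rp ≤ -α := by
    have hnn : (0:ℝ) ≤ (1-s)^2/(4*μ) := by positivity
    linarith [e4]
  intro t ht
  rcases eq_or_lt_of_le hs0 with hsz|hsz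
  · -- critical case s = 0
    have hrprm : rp = rm := by rw [hrp_def, hrm_def, ← hsz]; norm_num
    have hdψ : ∀ x, 0 ≤ x →
        HasDerivAt (fun u => Real.exp (-(rm*u)) * f u - v * u) 0 x := by
      intro x hx
      have d1 := exp_mul_deriv rm f (f' x) x (hf x hx)
      have d2 : HasDerivAt (fun u : ℝ => v * u) v x := by
        simpa using (hasDerivAt_id x).const_mul v
      have d3 := d1.sub d2
      refine d3.congr_deriv ?_
      have hs2x : f' x - rm * f x = v * Real.exp (rp*x) := step2 x hx
      rw [hs2x, hrprm, mul_comm v, ← mul_assoc, ← Real.exp_add]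
      simp
    have hψ := const_of_deriv_zero _ hdψ t ht
    simp only [mul_zero, neg_zero, Real.exp_zero, one_mul, h0, sub_zero] at hψ
    have hft : f t = v * t * Real.exp (rm*t) := by
      have h2 : Real.exp (-(rm*t)) * f t = v * t := by linarith [hψ]
      calc f t = (Real.exp (-(rm*t)) * f t) * Real.exp (rm*t) := by
            rw [mul_comm (Real.exp (-(rm*t))), mul_assoc, ← Real.exp_add]; simp
        _ = v * t * Real.exp (rm*t) := by rw [h2]
    have habs : |f t| = |v| * (t * Real.exp (rm*t)) := by
      rw [hft, abs_mul, abs_mul, abs_of_nonneg ht, abs_of_pos (Real.exp_pos _), mul_assoc]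
    rw [habs]
    have hb := boundB t ht (by rw [← hsz]; norm_num)
    rw [hrprm] at hb
    calc |v| * (t * Real.exp (rm*t)) ≤ |v| * (4*μ * Real.exp (-(α*t))) :=
          mul_le_mul_of_nonneg_left hb (abs_nonneg v)
      _ = 4 * μ * |v| * Real.exp (-(α * t)) := by ring
  · -- s > 0
    have hsne : s ≠ 0 := hsz.ne'
    have hdψ : ∀ x, 0 ≤ x →
        HasDerivAt (fun u => Real.exp (-(rm*u)) * f u - (v*μ/s) * Real.exp (s/μ*u)) 0 x := by
      intro x hx
      have d1 := exp_mul_deriv rm f (f' x) x (hf x hx)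
      have d2 : HasDerivAt (fun u : ℝ => (v*μ/s) * Real.exp (s/μ*u))
          ((v*μ/s) * (Real.exp (s/μ*x) * (s/μ))) x := by
        have di : HasDerivAt (fun u : ℝ => s/μ*u) (s/μ) x := by
          simpa using (hasDerivAt_id x).const_mul (s/μ)
        exact (di.exp).const_mul (v*μ/s)
      have d3 := d1.sub d2
      refine d3.congr_deriv ?_
      have hs2x : f' x - rm * f x = v * Real.exp (rp*x) := step2 x hx
      rw [hs2x, mul_comm v, ← mul_assoc, ← Real.exp_add]
      have hex : -(rm*x) + rp*x = s/μ*x := by linear_combination x * e3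
      rw [hex]
      field_simp
      ring
    have hψ := const_of_deriv_zero _ hdψ t ht
    simp only [mul_zero, neg_zero, Real.exp_zero, one_mul, h0, mul_one] at hψ
    have hft : f t = (v*μ/s) * (Real.exp (rp*t) - Real.exp (rm*t)) := by
      have h2 : Real.exp (-(rm*t)) * f t = (v*μ/s) * (Real.exp (s/μ*t) - 1) := by
        rw [mul_sub, mul_one]; linarith [hψ]
      have hrmd : rm*t + s/μ*t = rp*t := by linear_combination (-t) * e3
      calc f t = (Real.exp (-(rm*t)) * f t) * Real.exp (rm*t) := by
            rw [mul_comm (Real.exp (-(rm*t))), mul_assoc, ← Real.exp_add]; simp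
        _ = (v*μ/s) * (Real.exp (s/μ*t) - 1) * Real.exp (rm*t) := by rw [h2]
        _ = (v*μ/s) * (Real.exp (rm*t + s/μ*t) - Real.exp (rm*t)) := by
            rw [Real.exp_add]; ring
        _ = (v*μ/s) * (Real.exp (rp*t) - Real.exp (rm*t)) := by rw [hrmd]
    have hEle : Real.exp (rm*t) ≤ Real.exp (rp*t) :=
      Real.exp_le_exp.2 (mul_le_mul_of_nonneg_right hrmrp ht)
    have habs : |f t| = (|v| * μ / s) * (Real.exp (rp*t) - Real.exp (rm*t)) := by
      rw [hft, abs_mul, abs_of_nonneg (sub_nonneg.2 hEle), abs_div, abs_mul,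
        abs_of_pos hμ, abs_of_pos hsz]
    have hEpt : Real.exp (rp*t) ≤ Real.exp (-(α*t)) := by
      apply Real.exp_le_exp.2
      have := mul_le_mul_of_nonneg_right hrpα ht
      linarith
    rw [habs]
    rcases le_or_gt (1/4 : ℝ) s with h14|h14
    · calc (|v| * μ / s) * (Real.exp (rp*t) - Real.exp (rm*t))
          ≤ (|v| * μ / s) * Real.exp (rp*t) := by
            apply mul_le_mul_of_nonneg_left _ (by positivity)
            linarith [Real.exp_pos (rm*t)]
        _ ≤ (4*μ* |v| ) * Real.exp (rp*t) := by
            apply mul_le_mul_of_nonneg_right _ (Real.exp_pos _).le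
            rw [div_le_iff₀ hsz]
            nlinarith [mul_nonneg (mul_nonneg hμ.le (abs_nonneg v)) (by linarith : (0:ℝ) ≤ 4*s-1)]
        _ ≤ 4*μ*|v| * Real.exp (-(α*t)) := by
            apply mul_le_mul_of_nonneg_left hEpt (by positivity)
    · have hsub : Real.exp (rp*t) - Real.exp (rm*t) ≤ s/μ * t * Real.exp (rp*t) := by
        have hrmd : rm*t = rp*t + -(s/μ*t) := by linear_combination (-t) * e3
        rw [hrmd, Real.exp_add]
        have h1x : 1 - (s/μ*t) ≤ Real.exp (-(s/μ*t)) := by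
          have := Real.add_one_le_exp (-(s/μ*t)); linarith
        have hEp := (Real.exp_pos (rp*t)).le
        nlinarith [Real.exp_pos (rp*t)]
      calc (|v| * μ / s) * (Real.exp (rp*t) - Real.exp (rm*t))
          ≤ (|v| * μ / s) * (s/μ * t * Real.exp (rp*t)) := by
            apply mul_le_mul_of_nonneg_left hsub (by positivity)
        _ = |v| * (t * Real.exp (rp*t)) := by field_simp
        _ ≤ |v| * (4*μ * Real.exp (-(α*t))) :=
            mul_le_mul_of_nonneg_left (boundB t ht h14) (abs_nonneg v)
        _ = 4 * μ * |v| * Real.exp (-(α * t)) := by ring
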